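/- Fix an enumeration (q_ℓ)_{ℓ ∈ ω} of the rationals in [0,1]. For f ∈ ω^ℕ let D_f = {(n, q_ℓ) : n ∈ ℕ, ℓ < f(n)} ⊆ 𝕄. Then the union ⋃{(D_f)* : f ∈ ω^ℕ} is a dense subset of 𝕄*. -/

import Mathlib

open Set Topology Filter

noncomputable section

/-- The unit interval `[0,1] ⊆ ℝ`. -/
abbrev UnitI : Type := Set.Icc (0:ℝ) 1

/-- The space `𝕄 = ℕ × [0,1]`. -/
abbrev Mspace : Type := ℕ × UnitI

/-- `β𝕄`, the Stone–Čech compactification of `𝕄`. -/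
abbrev betaM : Type := StoneCech Mspace

/-- The copy of `𝕄` inside `β𝕄`. -/
def Mcopy : Set betaM := Set.range (stoneCechUnit : Mspace → betaM)

/-- `𝕄* = β𝕄 ∖ 𝕄`. -/
def MstarS : Set betaM := Mcopyᶜ

/-- `A* = cl_{β𝕄}(A) ∖ 𝕄` for `A ⊆ 𝕄`. -/
def mstar (A : Set Mspace) : Set betaM := closure (stoneCechUnit '' A) \ Mcopy

/-- Separation lemma: if `g : 𝕄 → [0,1]` is continuous, vanishes on `E`,
and `g a ≠ 0`, then `stoneCechUnit a` is not in the closure of the image of `E`. -/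
lemma sep_lemma {g : Mspace → UnitI} (hg : Continuous g) {E : Set Mspace}
    (hE : ∀ x ∈ E, (g x : ℝ) = 0) {a : Mspace} (ha : (g a : ℝ) ≠ 0) :
    stoneCechUnit a ∉ closure (stoneCechUnit '' E) := by
  intro hmem
  have hφ : Continuous (stoneCechExtend hg) := continuous_stoneCechExtend hg
  have h1 : stoneCechExtend hg (stoneCechUnit a) ∈
      closure (stoneCechExtend hg '' (stoneCechUnit '' E)) := by
    exact (image_closure_subset_closure_image hφ) ⟨_, hmem, rfl⟩
  have himg : stoneCechExtend hg '' (stoneCechUnit '' E) = g '' E := by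
    rw [← image_comp]
    exact congrArg (· '' E) (stoneCechExtend_extends hg)
  rw [himg] at h1
  have h2 : g '' E ⊆ {(⟨0, by norm_num⟩ : UnitI)} := by
    rintro _ ⟨x, hx, rfl⟩
    exact Subtype.ext (hE x hx)
  have h3 : stoneCechExtend hg (stoneCechUnit a) = (⟨0, by norm_num⟩ : UnitI) := by
    have := closure_minimal h2 isClosed_singleton h1
    simpa using this
  have h4 : stoneCechExtend hg (stoneCechUnit a) = g a := congrFun (stoneCechExtend_extends hg) a
  rw [h4] at h3
  exact ha (by rw [h3])

/-- Density of the enumerated rationals in `[0,1]`. -/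
lemma rat_dense_in_unitI (q : ℕ → UnitI)
    (hran : Set.range q = {x : UnitI | ∃ r : ℚ, ((r : ℝ)) = (x : ℝ)})
    {O : Set UnitI} (hO : IsOpen O) {t : UnitI} (ht : t ∈ O) : ∃ ℓ, q ℓ ∈ O := by
  obtain ⟨O', hO', rfl⟩ := isOpen_induced_iff.mp hO
  obtain ⟨δ, hδ, hball⟩ := Metric.isOpen_iff.mp hO' t.1 ht
  obtain ⟨ht0, ht1⟩ := t.2
  have key : ∃ r : ℚ, (r:ℝ) ∈ Set.Icc (0:ℝ) 1 ∧ |(r:ℝ) - t.1| < δ := by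
    rcases lt_or_eq_of_le ht1 with h1 | h1
    · obtain ⟨r, hr1, hr2⟩ := exists_rat_btwn (show t.1 < min 1 (t.1 + δ) from
        lt_min h1 (by linarith))
      exact ⟨r, ⟨le_of_lt (lt_of_le_of_lt ht0 hr1), le_of_lt (lt_of_lt_of_le hr2 (min_le_left _ _))⟩,
        by rw [abs_sub_lt_iff]; constructor <;>
          [linarith [lt_of_lt_of_le hr2 (min_le_right _ _)]; linarith]⟩
    · obtain ⟨r, hr1, hr2⟩ := exists_rat_btwn (show max 0 (1 - δ) < (1:ℝ) from
        max_lt one_pos (by linarith))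
      exact ⟨r, ⟨le_of_lt (lt_of_le_of_lt (le_max_left _ _) hr1), le_of_lt hr2⟩,
        by rw [h1, abs_sub_lt_iff]; constructor <;>
          [linarith; linarith [lt_of_le_of_lt (le_max_right _ _) hr1]]⟩
  obtain ⟨r, hrI, hrδ⟩ := key
  have : (⟨(r:ℝ), hrI⟩ : UnitI) ∈ Set.range q := by
    rw [hran]; exact ⟨r, rfl⟩
  obtain ⟨ℓ, hℓ⟩ := this
  refine ⟨ℓ, ?_⟩
  show q ℓ ∈ Subtype.val ⁻¹' O'
  have : (q ℓ : ℝ) = r := by rw [hℓ]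
  apply hball
  simp only [Metric.mem_ball, Real.dist_eq, this]
  exact hrδ

/-- for an enumeration `(q_ℓ)` of the rationals in `[0,1]` and
`D_f = {(n,q_ℓ) : ℓ < f(n)}`, the union `⋃_f (D_f)*` is dense in `𝕄*`. -/
theorem union_of_Df_star_dense (q : ℕ → UnitI) (hinj : Function.Injective q)
    (hran : Set.range q = {x : UnitI | ∃ r : ℚ, ((r : ℝ)) = (x : ℝ)}) :
    MstarS ⊆ closure (⋃ f : ℕ → ℕ, mstar {p : Mspace | ∃ ℓ : ℕ, ℓ < f p.1 ∧ p.2 = q ℓ}) := by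
  classical
  intro x hx
  rw [mem_closure_iff]
  intro U hU hxU
  -- regularity: find open W with x ∈ W and closure W ⊆ U
  obtain ⟨Vc, hVc_mem, hVc_closed, hVc_sub⟩ :=
    exists_mem_nhds_isClosed_subset (hU.mem_nhds hxU)
  set W : Set betaM := interior Vc with hWdef
  have hW_open : IsOpen W := isOpen_interior
  have hxW : x ∈ W := mem_interior_iff_mem_nhds.mpr hVc_mem
  have hclW_U : closure W ⊆ U :=
    (closure_minimal interior_subset hVc_closed).trans hVc_sub
  -- V : preimage in 𝕄
  set s : Mspace → betaM := stoneCechUnit with hsdef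
  set V : Set Mspace := s ⁻¹' W with hVdef
  have hV_open : IsOpen V := hW_open.preimage continuous_stoneCechUnit
  -- x ∈ closure (s '' V)
  have hx_clV : x ∈ closure (s '' V) := by
    have h1 : x ∈ W ∩ closure (Set.range s) := ⟨hxW, denseRange_stoneCechUnit x⟩
    have h2 := hW_open.inter_closure h1
    refine closure_mono ?_ h2
    rintro y ⟨hyW, a, rfl⟩
    exact ⟨a, hyW, rfl⟩
  -- the set of columns meeting V at a rational point
  set S : Set ℕ := {n | ∃ ℓ, ((n, q ℓ) : Mspace) ∈ V} with hSdef
  -- slices are open; columns meeting V meet it at a rational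
  have hcol : ∀ n : ℕ, ∀ t : UnitI, ((n, t) : Mspace) ∈ V → n ∈ S := by
    intro n t hnt
    have hOopen : IsOpen {u : UnitI | ((n, u) : Mspace) ∈ V} :=
      hV_open.preimage (by fun_prop)
    obtain ⟨ℓ, hℓ⟩ := rat_dense_in_unitI q hran hOopen hnt
    exact ⟨ℓ, hℓ⟩
  -- S is infinite
  have hS_inf : S.Infinite := by
    intro hS_fin
    have hVsub : V ⊆ S ×ˢ (Set.univ : Set UnitI) := by
      rintro ⟨n, t⟩ hnt
      exact ⟨hcol n t hnt, trivial⟩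
    have hK : IsCompact (S ×ˢ (Set.univ : Set UnitI)) :=
      hS_fin.isCompact.prod isCompact_univ
    have hKs : IsCompact (s '' (S ×ˢ (Set.univ : Set UnitI))) :=
      hK.image continuous_stoneCechUnit
    have hcl : closure (s '' V) ⊆ s '' (S ×ˢ (Set.univ : Set UnitI)) :=
      closure_minimal (image_mono hVsub) hKs.isClosed
    have : x ∈ Set.range s := by
      obtain ⟨a, _, ha⟩ := hcl hx_clV
      exact ⟨a, ha⟩
    exact hx this
  -- choice of rational witnesses
  have hch : ∀ n ∈ S, ((n, q (if h : ∃ ℓ, ((n, q ℓ) : Mspace) ∈ V then h.choose else 0)) : Mspace) ∈ V := by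
    intro n hn
    simp only [hSdef, mem_setOf_eq] at hn
    rw [dif_pos hn]
    exact hn.choose_spec
  set L : ℕ → ℕ := fun n => if h : ∃ ℓ, ((n, q ℓ) : Mspace) ∈ V then h.choose else 0 with hLdef
  set E : Set Mspace := {p | p.1 ∈ S ∧ p.2 = q (L p.1)} with hEdef
  have hEV : E ⊆ V := by
    rintro ⟨n, t⟩ ⟨hn, ht⟩
    simp only at ht
    rw [show ((n, t) : Mspace) = (n, q (L n)) from by rw [ht]]
    exact hch n hn
  -- E is contained in D_f for f := L + 1
  set f : ℕ → ℕ := fun n => L n + 1 with hfdef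
  have hED : E ⊆ {p : Mspace | ∃ ℓ : ℕ, ℓ < f p.1 ∧ p.2 = q ℓ} := by
    rintro ⟨n, t⟩ ⟨hn, ht⟩
    exact ⟨L n, Nat.lt_succ_self _, ht⟩
  -- key claim: closure (s '' E) is not contained in Mcopy
  have hkey : ¬ (closure (s '' E) ⊆ Mcopy) := by
    intro hsub
    -- then closure (s '' E) = s '' E
    have hclE : closure (s '' E) ⊆ s '' E := by
      intro y hy
      obtain ⟨a, rfl⟩ := hsub hy
      rcases Classical.em (a ∈ E) with haE | haE
      · exact ⟨a, haE, rfl⟩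
      exfalso
      obtain ⟨m, t⟩ := a
      -- build a separating function
      rcases Classical.em (m ∈ S) with hm | hm
      · -- t ≠ q (L m)
        have htne : t ≠ q (L m) := by
          intro h
          exact haE ⟨hm, h⟩
        set e : UnitI := q (L m) with hedef
        have hd : (0:ℝ) < dist (t:ℝ) (e:ℝ) := by
          rw [dist_pos]
          intro h
          exact htne (Subtype.ext h)
        set g : Mspace → UnitI := fun p =>
          ⟨(if p.1 = m then (1:ℝ) else 0) * min 1 (dist (p.2:ℝ) (e:ℝ) / dist (t:ℝ) (e:ℝ)), by
            constructor
            · apply mul_nonneg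
              · split <;> norm_num
              · exact le_min zero_le_one (div_nonneg dist_nonneg hd.le)
            · apply mul_le_one₀
              · split <;> norm_num
              · exact le_min zero_le_one (div_nonneg dist_nonneg hd.le)
              · exact min_le_left _ _⟩ with hgdef
        have hgc : Continuous g := by
          apply Continuous.subtype_mk
          apply Continuous.mul
          · exact (continuous_of_discreteTopology
              (f := fun n : ℕ => if n = m then (1:ℝ) else 0)).comp continuous_fst
          · exact continuous_const.min
              (((continuous_subtype_val.comp continuous_snd).dist continuous_const).div_const _)
        have hgE : ∀ p ∈ E, (g p : ℝ) = 0 := by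
          rintro ⟨n, u⟩ ⟨hn, hu⟩
          simp only at hu
          show (if n = m then (1:ℝ) else 0) * min 1 (dist (u:ℝ) (e:ℝ) / dist (t:ℝ) (e:ℝ)) = 0
          rcases Classical.em (n = m) with h | h
          · subst h
            rw [hu]
            simp [hedef]
          · rw [if_neg h, zero_mul]
        have hga : (g (m, t) : ℝ) ≠ 0 := by
          show (if m = m then (1:ℝ) else 0) * min 1 (dist (t:ℝ) (e:ℝ) / dist (t:ℝ) (e:ℝ)) ≠ 0
          rw [if_pos rfl, div_self hd.ne', min_self, one_mul]
          norm_num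
        exact sep_lemma hgc hgE hga hy
      · -- m ∉ S : indicator of column m separates
        set g : Mspace → UnitI := fun p =>
          ⟨if p.1 = m then (1:ℝ) else 0, by split <;> norm_num⟩ with hgdef
        have hgc : Continuous g := by
          apply Continuous.subtype_mk
          exact (continuous_of_discreteTopology
            (f := fun n : ℕ => if n = m then (1:ℝ) else 0)).comp continuous_fst
        have hgE : ∀ p ∈ E, (g p : ℝ) = 0 := by
          rintro ⟨n, u⟩ ⟨hn, _⟩
          show (if n = m then (1:ℝ) else 0) = 0
          rw [if_neg]
          intro h; exact hm (h ▸ hn)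
        have hga : (g (m, t) : ℝ) ≠ 0 := by
          show (if m = m then (1:ℝ) else 0) ≠ 0
          rw [if_pos rfl]; norm_num
        exact sep_lemma hgc hgE hga hy
    -- so s '' E is compact
    have hcomp : IsCompact (s '' E) :=
      (isClosed_of_closure_subset hclE).isCompact
    -- map to [0,1] via 1/(n+1)
    set g2 : Mspace → UnitI := fun p => ⟨1 / ((p.1 : ℝ) + 1), by
      constructor
      · positivity
      · rw [div_le_one (by positivity)]
        simp⟩ with hg2def
    have hg2c : Continuous g2 := by
      apply Continuous.subtype_mk
      exact (continuous_of_discreteTopology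
        (f := fun n : ℕ => 1 / ((n : ℝ) + 1))).comp continuous_fst
    have himg : stoneCechExtend hg2c '' (s '' E) = g2 '' E := by
      rw [← image_comp]
      exact congrArg (· '' E) (stoneCechExtend_extends hg2c)
    have hcomp2 : IsCompact ((fun u : UnitI => (u:ℝ)) '' (g2 '' E)) := by
      rw [← himg]
      exact ((hcomp.image (continuous_stoneCechExtend hg2c)).image continuous_subtype_val)
    set C : Set ℝ := (fun u : UnitI => (u:ℝ)) '' (g2 '' E) with hCdef
    have hC0 : (0:ℝ) ∈ closure C := by
      rw [Metric.mem_closure_iff]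
      intro ε hε
      obtain ⟨n, hnS, hn⟩ := hS_inf.exists_gt ⌈1/ε⌉₊
      refine ⟨1 / ((n : ℝ) + 1), ⟨g2 (n, q (L n)), ⟨(n, q (L n)), ⟨hnS, rfl⟩, rfl⟩, rfl⟩, ?_⟩
      rw [Real.dist_eq]
      have hn1 : (1:ℝ)/ε < (n:ℝ) + 1 := by
        calc (1:ℝ)/ε ≤ ⌈1/ε⌉₊ := Nat.le_ceil _
        _ < (n:ℝ) := by exact_mod_cast hn
        _ < (n:ℝ) + 1 := by linarith
      have hpos : (0:ℝ) < (n:ℝ) + 1 := by positivity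
      rw [abs_sub_comm, sub_zero, abs_of_nonneg (by positivity)]
      rw [div_lt_iff₀ hpos]
      rw [div_lt_iff₀ hε] at hn1
      linarith
    have hC0' : (0:ℝ) ∈ C := hcomp2.isClosed.closure_subset hC0
    obtain ⟨u, ⟨p, _, rfl⟩, hu⟩ := hC0'
    simp only [hg2def] at hu
    have : (0:ℝ) < 1 / ((p.1:ℝ) + 1) := by positivity
    rw [hu] at this
    exact lt_irrefl 0 this
  -- extract the point
  obtain ⟨y, hy_cl, hy_not⟩ := not_subset.mp hkey
  refine ⟨y, ?_, ?_⟩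
  · apply hclW_U
    refine closure_mono ?_ hy_cl
    rintro _ ⟨a, haE, rfl⟩
    exact hEV haE
  · refine mem_iUnion.mpr ⟨f, ?_, hy_not⟩
    exact closure_mono (image_mono hED) hy_cl
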